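/- (Klein's inequality for the exponential) Let A and B be Hermitian matrices of the same size. Then Tr(e^B) ≥ Tr(e^A) + Tr(e^A(B − A)). -/

import Mathlib

open Matrix

section
variable {d : Type*} [Fintype d] [DecidableEq d]

lemma herm_exp_eq (A : Matrix d d ℂ) (hA : A.IsHermitian) :
    NormedSpace.exp A = (hA.eigenvectorUnitary : Matrix d d ℂ) *
      diagonal (fun i => (Real.exp (hA.eigenvalues i) : ℂ)) *
      star (hA.eigenvectorUnitary : Matrix d d ℂ) := by
  set U := (hA.eigenvectorUnitary : Matrix d d ℂ)
  have hU1 : star U * U = 1 := Matrix.mem_unitaryGroup_iff'.mp hA.eigenvectorUnitary.2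
  have hUinv : U⁻¹ = star U := inv_eq_left_inv hU1
  have hUu : IsUnit U := (Matrix.isUnit_iff_isUnit_det U).mpr (Matrix.isUnit_det_of_left_inverse hU1)
  conv_lhs => rw [hA.spectral_theorem, Unitary.conjStarAlgAut_apply, ← hUinv]
  rw [Matrix.exp_conj U _ hUu, Matrix.exp_diagonal, hUinv]
  congr 2
  funext i
  rw [Pi.exp_def]
  simp [← Complex.exp_eq_exp_ℂ, Complex.ofReal_exp]

lemma diag_conj_entry (W : Matrix d d ℂ) (v : d → ℝ) (i : d) :
    (W * diagonal (fun j => (v j : ℂ)) * star W) i i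
      = ((∑ j, v j * Complex.normSq (W i j) : ℝ) : ℂ) := by
  push_cast
  simp only [mul_apply, diagonal_apply, mul_ite, mul_zero, Finset.sum_ite_eq',
    Finset.mem_univ, if_true, Matrix.star_apply]
  refine Finset.sum_congr rfl fun j _ => ?_
  rw [show star (W i j) = (starRingEnd ℂ) (W i j) from rfl]
  rw [mul_comm (W i j) ((v j : ℂ)), mul_assoc, Complex.mul_conj]

lemma trace_diag_mul (v : d → ℝ) (M : Matrix d d ℂ) :
    (diagonal (fun i => (v i : ℂ)) * M).trace = ∑ i, (v i : ℂ) * M i i := by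
  simp [Matrix.trace, Matrix.diag, diagonal_mul]

lemma trace_exp_herm (A : Matrix d d ℂ) (hA : A.IsHermitian) :
    (NormedSpace.exp A).trace = ((∑ i, Real.exp (hA.eigenvalues i) : ℝ) : ℂ) := by
  set U := (hA.eigenvectorUnitary : Matrix d d ℂ)
  have hU1 : star U * U = 1 := Matrix.mem_unitaryGroup_iff'.mp hA.eigenvectorUnitary.2
  rw [herm_exp_eq A hA, Matrix.trace_mul_cycle, hU1, one_mul, trace_diagonal]
  push_cast
  rfl

lemma trace_exp_mul_herm (A B : Matrix d d ℂ) (hA : A.IsHermitian) (hB : B.IsHermitian) :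
    (NormedSpace.exp A * B).trace =
      ((∑ i, ∑ j, Real.exp (hA.eigenvalues i) * hB.eigenvalues j *
        Complex.normSq ((star (hA.eigenvectorUnitary : Matrix d d ℂ) *
          (hB.eigenvectorUnitary : Matrix d d ℂ)) i j) : ℝ) : ℂ) := by
  set U := (hA.eigenvectorUnitary : Matrix d d ℂ)
  set V := (hB.eigenvectorUnitary : Matrix d d ℂ)
  set a := hA.eigenvalues
  set b := hB.eigenvalues
  have hU1 : star U * U = 1 := Matrix.mem_unitaryGroup_iff'.mp hA.eigenvectorUnitary.2
  have hU2 : U * star U = 1 := Matrix.mem_unitaryGroup_iff.mp hA.eigenvectorUnitary.2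
  set W := star U * V with hWdef
  have hVU : V = U * W := by rw [hWdef, ← mul_assoc, hU2, one_mul]
  have hBspec : B = V * diagonal (fun j => ((b j : ℝ) : ℂ)) * star V := hB.spectral_theorem
  have hexpAB : NormedSpace.exp A * B =
      U * (diagonal (fun i => (Real.exp (a i) : ℂ)) *
        (W * diagonal (fun j => ((b j : ℝ) : ℂ)) * star W)) * star U := by
    conv_lhs => rw [herm_exp_eq A hA, hBspec, hVU, Matrix.star_mul]
    simp only [mul_assoc]
    rw [← mul_assoc (star U) U, hU1, one_mul]
  rw [hexpAB, Matrix.trace_mul_cycle, hU1, one_mul, trace_diag_mul]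
  simp only [diag_conj_entry]
  push_cast
  refine Finset.sum_congr rfl fun i _ => ?_
  rw [Finset.mul_sum]
  refine Finset.sum_congr rfl fun j _ => ?_
  ring

end

lemma klein_real' {d : Type*} [Fintype d] (P : d → d → ℝ) (a b : d → ℝ)
    (hP : ∀ i j, 0 ≤ P i j) (hrow : ∀ i, ∑ j, P i j = 1) (hcol : ∀ j, ∑ i, P i j = 1) :
    (∑ i, Real.exp (a i)) + ((∑ i, ∑ j, Real.exp (a i) * b j * P i j)
      - ∑ i, Real.exp (a i) * a i) ≤ ∑ j, Real.exp (b j) := by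
  have h1 : (∑ i, Real.exp (a i)) = ∑ i, ∑ j, Real.exp (a i) * P i j := by
    refine Finset.sum_congr rfl fun i _ => ?_
    rw [← Finset.mul_sum, hrow i, mul_one]
  have h2 : (∑ i, Real.exp (a i) * a i) = ∑ i, ∑ j, Real.exp (a i) * a i * P i j := by
    refine Finset.sum_congr rfl fun i _ => ?_
    rw [← Finset.mul_sum, hrow i, mul_one]
  have h3 : (∑ j, Real.exp (b j)) = ∑ i, ∑ j, Real.exp (b j) * P i j := by
    rw [Finset.sum_comm]
    refine Finset.sum_congr rfl fun j _ => ?_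
    rw [← Finset.mul_sum, hcol j, mul_one]
  rw [h1, h2, h3, ← Finset.sum_sub_distrib, ← Finset.sum_add_distrib]
  refine Finset.sum_le_sum fun i _ => ?_
  rw [← Finset.sum_sub_distrib, ← Finset.sum_add_distrib]
  refine Finset.sum_le_sum fun j _ => ?_
  have key : Real.exp (a i) + (Real.exp (a i) * b j - Real.exp (a i) * a i)
      ≤ Real.exp (b j) := by
    have := Real.add_one_le_exp (b j - a i)
    have h := mul_le_mul_of_nonneg_left this (Real.exp_nonneg (a i))
    rw [← Real.exp_add, show a i + (b j - a i) = b j from by ring] at h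
    nlinarith
  nlinarith [hP i j, key]

/-- Klein's inequality for the exponential function. -/
theorem klein_exp {d : Type*} [Fintype d] [DecidableEq d]
    (A B : Matrix d d ℂ) (hA : A.IsHermitian) (hB : B.IsHermitian) :
    ((NormedSpace.exp B).trace).re ≥
      ((NormedSpace.exp A).trace).re + ((NormedSpace.exp A * (B - A)).trace).re := by
  set U := (hA.eigenvectorUnitary : Matrix d d ℂ)
  set V := (hB.eigenvectorUnitary : Matrix d d ℂ)
  set a := hA.eigenvalues
  set b := hB.eigenvalues
  have hU1 : star U * U = 1 := Matrix.mem_unitaryGroup_iff'.mp hA.eigenvectorUnitary.2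
  have hU2 : U * star U = 1 := Matrix.mem_unitaryGroup_iff.mp hA.eigenvectorUnitary.2
  have hV1 : star V * V = 1 := Matrix.mem_unitaryGroup_iff'.mp hB.eigenvectorUnitary.2
  have hV2 : V * star V = 1 := Matrix.mem_unitaryGroup_iff.mp hB.eigenvectorUnitary.2
  set W := star U * V with hWdef
  have hW1 : star W * W = 1 := by
    rw [hWdef, Matrix.star_mul, star_star, mul_assoc, ← mul_assoc U, hU2, one_mul, hV1]
  have hW2 : W * star W = 1 := by
    rw [hWdef, Matrix.star_mul, star_star, mul_assoc, ← mul_assoc V, hV2, one_mul, hU1]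
  have hP : ∀ i j, 0 ≤ Complex.normSq (W i j) := fun i j => Complex.normSq_nonneg _
  have hrow : ∀ i, ∑ j, Complex.normSq (W i j) = 1 := by
    intro i
    have h0 := congrFun (congrFun hW2 i) i
    rw [mul_apply, Matrix.one_apply_eq] at h0
    have h1 : ∑ j, (Complex.normSq (W i j) : ℂ) = 1 := by
      rw [← h0]
      refine Finset.sum_congr rfl fun j _ => ?_
      rw [Matrix.star_apply, show star (W i j) = (starRingEnd ℂ) (W i j) from rfl,
        Complex.mul_conj]
    exact_mod_cast h1
  have hcol : ∀ j, ∑ i, Complex.normSq (W i j) = 1 := by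
    intro j
    have h0 := congrFun (congrFun hW1 j) j
    rw [mul_apply, Matrix.one_apply_eq] at h0
    have h1 : ∑ i, (Complex.normSq (W i j) : ℂ) = 1 := by
      rw [← h0]
      refine Finset.sum_congr rfl fun i _ => ?_
      rw [Matrix.star_apply, show star (W i j) = (starRingEnd ℂ) (W i j) from rfl,
        mul_comm, Complex.mul_conj]
    exact_mod_cast h1
  have tAA : (NormedSpace.exp A * A).trace = ((∑ i, Real.exp (a i) * a i : ℝ) : ℂ) := by
    rw [trace_exp_mul_herm A A hA hA, hU1]
    norm_cast
    refine Finset.sum_congr rfl fun i _ => ?_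
    simp [Matrix.one_apply, apply_ite Complex.normSq]
    rfl
  rw [ge_iff_le, trace_exp_herm B hB, trace_exp_herm A hA, mul_sub, Matrix.trace_sub,
    trace_exp_mul_herm A B hA hB, tAA]
  simp only [Complex.sub_re, Complex.ofReal_re]
  exact klein_real' (fun i j => Complex.normSq (W i j)) a b hP hrow hcol
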